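/- Let k be a field and R = ⊕_{d∈ℕ} R_d a commutative ℕ-graded k-algebra with R₊ := ⊕_{d>0} R_d ≠ 0. If every finite-order k-linear differential operator on R that is homogeneous of some negative degree is zero, then δ(R₊) ⊆ R₊ for every finite-order differential operator δ on R; hence R₊ is a nonzero proper additive subgroup of R stable under all differential operators and R is not a simple D_{R/k}-module. Consequently, if R is a simple D_{R/k}-module, then there exist an integer e < 0 and a nonzero finite-order differential operator on R that is homogeneous of degree e. -/

import Mathlib

open MvPolynomial

/-- A `k`-linear map `δ : R → R` is a differential operator of order at most `n`:
order `≤ 0` means `δ (r * s) = r * δ s` for all `r s`, and order `≤ n + 1` means all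
commutators `[δ, μ_r]` with multiplication operators have order `≤ n`. -/
def IsDiffOpOfOrder (k : Type*) {R : Type*} [CommRing k] [CommRing R] [Algebra k R] :
    ℕ → (R →ₗ[k] R) → Prop
  | 0 => fun δ => ∀ r s : R, δ (r * s) = r * δ s
  | n + 1 => fun δ => ∀ r : R,
      IsDiffOpOfOrder k n (δ ∘ₗ LinearMap.mulLeft k r - LinearMap.mulLeft k r ∘ₗ δ)

/-- `δ` is homogeneous of degree `e ∈ ℤ` with respect to the grading `𝒜`: it sends
elements of degree `d` to elements of degree `d + e`, interpreted as `0` when `d + e < 0`. -/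
def HomogeneousOfDegree {k R : Type*} [CommRing k] [CommRing R] [Algebra k R]
    (𝒜 : ℕ → Submodule k R) (δ : R →ₗ[k] R) (e : ℤ) : Prop :=
  ∀ (d : ℕ), ∀ r ∈ 𝒜 d,
    (∀ m : ℕ, (m : ℤ) = (d : ℤ) + e → δ r ∈ 𝒜 m) ∧ ((d : ℤ) + e < 0 → δ r = 0)

/-- The grading induced on a quotient of a polynomial ring by a (homogeneous) ideal:
the degree-`d` piece is the image of the degree-`d` homogeneous polynomials. -/
noncomputable def quotGrade {σ : Type*} (k : Type*) [CommRing k]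
    (I : Ideal (MvPolynomial σ k)) (d : ℕ) : Submodule k (MvPolynomial σ k ⧸ I) :=
  (MvPolynomial.homogeneousSubmodule σ k d).map (Ideal.Quotient.mkₐ k I).toLinearMap

section Aux

variable {k R : Type*} [CommRing k] [CommRing R] [Algebra k R]

theorem isDiffOp_zero : ∀ n : ℕ, IsDiffOpOfOrder k n (0 : R →ₗ[k] R)
  | 0 => by intro r s; simp
  | n + 1 => by
    intro r
    simp only [LinearMap.zero_comp, LinearMap.comp_zero, sub_self]
    exact isDiffOp_zero n

theorem isDiffOp_add : ∀ (n : ℕ) (δ δ' : R →ₗ[k] R), IsDiffOpOfOrder k n δ →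
    IsDiffOpOfOrder k n δ' → IsDiffOpOfOrder k n (δ + δ')
  | 0 => fun δ δ' h h' => by
    intro r s
    simp only [LinearMap.add_apply, h r s, h' r s, mul_add]
  | n + 1 => fun δ δ' h h' => by
    intro r
    have e : (δ + δ') ∘ₗ LinearMap.mulLeft k r - LinearMap.mulLeft k r ∘ₗ (δ + δ')
        = (δ ∘ₗ LinearMap.mulLeft k r - LinearMap.mulLeft k r ∘ₗ δ)
          + (δ' ∘ₗ LinearMap.mulLeft k r - LinearMap.mulLeft k r ∘ₗ δ') := by
      ext x
      simp only [LinearMap.sub_apply, LinearMap.add_apply, LinearMap.comp_apply,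
        LinearMap.mulLeft_apply]
      ring
    rw [e]
    exact isDiffOp_add n _ _ (h r) (h' r)

variable (𝒜 : ℕ → Submodule k R) [GradedAlgebra 𝒜]

/-- The `k`-linear projection onto the degree-`d` component. -/
noncomputable def projL (d : ℕ) : R →ₗ[k] R :=
  (𝒜 d).subtype ∘ₗ (DirectSum.component k ℕ (fun i => 𝒜 i) d) ∘ₗ
    (DirectSum.decomposeLinearEquiv 𝒜).toLinearMap

theorem projL_apply (d : ℕ) (x : R) : projL 𝒜 d x = (DirectSum.decompose 𝒜 x d : R) := rfl

theorem projL_mem (d : ℕ) (x : R) : projL 𝒜 d x ∈ 𝒜 d := by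
  rw [projL_apply]; exact (DirectSum.decompose 𝒜 x d).2

/-- The projection indexed by an integer, `0` for negative indices. -/
noncomputable def qL (j : ℤ) : R →ₗ[k] R := if 0 ≤ j then projL 𝒜 j.toNat else 0

theorem qL_mul {a : ℕ} {r : R} (hr : r ∈ 𝒜 a) (x : R) (j : ℤ) :
    qL 𝒜 j (r * x) = r * qL 𝒜 (j - a) x := by
  unfold qL
  by_cases h1 : 0 ≤ j - (a : ℤ)
  · have h0 : 0 ≤ j := by omega
    rw [if_pos h1, if_pos h0]
    have ha : a ≤ j.toNat := by omega
    rw [projL_apply, projL_apply, DirectSum.decompose_mul, DirectSum.decompose_of_mem 𝒜 hr,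
      DirectSum.coe_of_mul_apply_of_le 𝒜 ⟨r, hr⟩ (DirectSum.decompose 𝒜 x) j.toNat ha]
    have : j.toNat - a = (j - a).toNat := by omega
    rw [this]
  · rw [if_neg h1]
    by_cases h0 : 0 ≤ j
    · rw [if_pos h0]
      have hna : ¬ a ≤ j.toNat := by omega
      rw [projL_apply, DirectSum.decompose_mul, DirectSum.decompose_of_mem 𝒜 hr,
        DirectSum.coe_of_mul_apply_of_not_le 𝒜 ⟨r, hr⟩ (DirectSum.decompose 𝒜 x) j.toNat hna]
      simp
    · rw [if_neg h0]; simp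

/-- The degree-`e` homogeneous component of a linear operator. -/
noncomputable def compOp (e : ℤ) (δ : R →ₗ[k] R) : R →ₗ[k] R :=
  (DirectSum.toModule k ℕ R fun d => (qL 𝒜 ((d : ℤ) + e)) ∘ₗ δ ∘ₗ (𝒜 d).subtype) ∘ₗ
    (DirectSum.decomposeLinearEquiv 𝒜).toLinearMap

theorem compOp_apply_of_mem {d : ℕ} {r : R} (hr : r ∈ 𝒜 d) (e : ℤ) (δ : R →ₗ[k] R) :
    compOp 𝒜 e δ r = qL 𝒜 ((d : ℤ) + e) (δ r) := by
  unfold compOp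
  rw [LinearMap.comp_apply]
  have : (DirectSum.decomposeLinearEquiv 𝒜).toLinearMap r
      = DirectSum.lof k ℕ (fun i => 𝒜 i) d ⟨r, hr⟩ := by
    rw [DirectSum.lof_eq_of]
    exact DirectSum.decompose_of_mem 𝒜 hr
  rw [this, DirectSum.toModule_lof]
  rfl

theorem compOp_homog (e : ℤ) (δ : R →ₗ[k] R) : HomogeneousOfDegree 𝒜 (compOp 𝒜 e δ) e := by
  intro d r hr
  constructor
  · intro m hm
    rw [compOp_apply_of_mem 𝒜 hr]
    have h0 : 0 ≤ (d : ℤ) + e := by omega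
    unfold qL
    rw [if_pos h0]
    have : ((d : ℤ) + e).toNat = m := by omega
    rw [this]
    exact projL_mem 𝒜 m _
  · intro hneg
    rw [compOp_apply_of_mem 𝒜 hr]
    unfold qL
    rw [if_neg (not_le.mpr hneg)]
    rfl

theorem compOp_isDiffOp : ∀ (n : ℕ) (δ : R →ₗ[k] R), IsDiffOpOfOrder k n δ →
    ∀ e : ℤ, IsDiffOpOfOrder k n (compOp 𝒜 e δ)
  | 0 => fun δ hδ e => by
    intro r s
    refine DirectSum.Decomposition.inductionOn 𝒜
      (motive := fun r => ∀ s : R, compOp 𝒜 e δ (r * s) = r * compOp 𝒜 e δ s) ?_ ?_ ?_ r s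
    · intro s; simp
    · rintro a ⟨r, hr⟩ s
      refine DirectSum.Decomposition.inductionOn 𝒜
        (motive := fun s => compOp 𝒜 e δ (r * s) = r * compOp 𝒜 e δ s) ?_ ?_ ?_ s
      · simp
      · rintro d ⟨s, hs⟩
        have hrs : r * s ∈ 𝒜 (a + d) := SetLike.mul_mem_graded hr hs
        rw [compOp_apply_of_mem 𝒜 hrs, compOp_apply_of_mem 𝒜 hs, hδ r s,
          qL_mul 𝒜 hr]
        congr 2
        push_cast; ring
      · intro s s' h h'
        simp only [mul_add, map_add, h, h']
    · intro r r' h h' s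
      simp only [add_mul, map_add, h s, h' s, LinearMap.add_apply]
  | n + 1 => fun δ hδ e => by
    intro r
    refine DirectSum.Decomposition.inductionOn 𝒜
      (motive := fun r => IsDiffOpOfOrder k n (compOp 𝒜 e δ ∘ₗ LinearMap.mulLeft k r
        - LinearMap.mulLeft k r ∘ₗ compOp 𝒜 e δ)) ?_ ?_ ?_ r
    · beta_reduce
      rw [LinearMap.mulLeft_zero_eq_zero]
      simp only [LinearMap.comp_zero, LinearMap.zero_comp, sub_self]
      exact isDiffOp_zero n
    · rintro a ⟨r, hr⟩
      have key : compOp 𝒜 e δ ∘ₗ LinearMap.mulLeft k r - LinearMap.mulLeft k r ∘ₗ compOp 𝒜 e δ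
          = compOp 𝒜 (e + a) (δ ∘ₗ LinearMap.mulLeft k r - LinearMap.mulLeft k r ∘ₗ δ) := by
        ext s
        refine DirectSum.Decomposition.inductionOn 𝒜
          (motive := fun s => (compOp 𝒜 e δ ∘ₗ LinearMap.mulLeft k r
            - LinearMap.mulLeft k r ∘ₗ compOp 𝒜 e δ) s
            = compOp 𝒜 (e + a) (δ ∘ₗ LinearMap.mulLeft k r - LinearMap.mulLeft k r ∘ₗ δ) s)
          ?_ ?_ ?_ s
        · simp
        · rintro d ⟨s, hs⟩
          have hrs : r * s ∈ 𝒜 (a + d) := SetLike.mul_mem_graded hr hs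
          simp only [LinearMap.sub_apply, LinearMap.comp_apply, LinearMap.mulLeft_apply]
          rw [compOp_apply_of_mem 𝒜 hrs, compOp_apply_of_mem 𝒜 hs,
            compOp_apply_of_mem 𝒜 hs (e + a)
              (δ ∘ₗ LinearMap.mulLeft k r - LinearMap.mulLeft k r ∘ₗ δ)]
          simp only [LinearMap.sub_apply, LinearMap.comp_apply, LinearMap.mulLeft_apply,
            map_sub]
          have h1 : ((a + d : ℕ) : ℤ) + e = (d : ℤ) + (e + a) := by push_cast; ring
          rw [h1]
          congr 1
          rw [qL_mul 𝒜 hr]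
          congr 2
          ring
        · intro s s' h h'
          simp only [map_add, h, h']
      rw [key]
      exact compOp_isDiffOp n _ (hδ r) (e + a)
    · intro r r' h h'
      have key : compOp 𝒜 e δ ∘ₗ LinearMap.mulLeft k (r + r')
          - LinearMap.mulLeft k (r + r') ∘ₗ compOp 𝒜 e δ
          = (compOp 𝒜 e δ ∘ₗ LinearMap.mulLeft k r - LinearMap.mulLeft k r ∘ₗ compOp 𝒜 e δ)
            + (compOp 𝒜 e δ ∘ₗ LinearMap.mulLeft k r'
              - LinearMap.mulLeft k r' ∘ₗ compOp 𝒜 e δ) := by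
        ext x
        simp only [LinearMap.sub_apply, LinearMap.add_apply, LinearMap.comp_apply,
          LinearMap.mulLeft_apply, add_mul, map_add]
        ring
      rw [key]
      exact isDiffOp_add n _ _ h h'


theorem projL_zero_eq_zero_of_mem_plus {Rplus : Submodule k R}
    (hRplus : Rplus = ⨆ d : ℕ, ⨆ _ : 0 < d, 𝒜 d) {x : R} (hx : x ∈ Rplus) :
    projL 𝒜 0 x = 0 := by
  rw [hRplus] at hx
  refine Submodule.iSup_induction _ (motive := fun x => projL 𝒜 0 x = 0) hx ?_ (by simp) ?_
  · intro d x hx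
    rcases Nat.eq_zero_or_pos d with h | h
    · subst h; rw [iSup_neg (lt_irrefl 0)] at hx
      simp only [Submodule.mem_bot] at hx; subst hx; simp
    · rw [iSup_pos h] at hx
      rw [projL_apply]
      rw [DirectSum.decompose_of_mem_ne 𝒜 hx (Nat.pos_iff_ne_zero.mp h)]
  · intro x y hx hy; rw [map_add, hx, hy, add_zero]

theorem mem_plus_of_projL_zero {Rplus : Submodule k R}
    (hRplus : Rplus = ⨆ d : ℕ, ⨆ _ : 0 < d, 𝒜 d) {x : R} (hx : projL 𝒜 0 x = 0) :
    x ∈ Rplus := by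
  classical
  rw [hRplus]
  rw [← DirectSum.sum_support_decompose 𝒜 x]
  refine Submodule.sum_mem _ ?_
  intro i hi
  have hne : (DirectSum.decompose 𝒜 x) i ≠ 0 := by
    simpa using DFinsupp.mem_support_iff.mp hi
  have hipos : 0 < i := by
    rcases Nat.eq_zero_or_pos i with h | h
    · exfalso; apply hne; subst h
      rw [projL_apply] at hx
      exact Subtype.ext hx
    · exact h
  exact Submodule.mem_iSup_of_mem i (Submodule.mem_iSup_of_mem hipos
    (DirectSum.decompose 𝒜 x i).2)

end Aux

/-- let `R` be a commutative ℕ-graded `k`-algebra (`k` a field) with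
irrelevant ideal `R₊ = ⊕_{d>0} R_d ≠ 0`.  If every finite-order differential operator
homogeneous of some negative degree vanishes, then every differential operator preserves
`R₊`, so `R₊` is a nonzero proper additive subgroup stable under all differential
operators and `R` is not a simple `D_{R/k}`-module.  Consequently, if `R` is a simple
`D_{R/k}`-module then there is a nonzero finite-order differential operator homogeneous
of some negative degree. -/
theorem negative_degree_diffop_of_D_simple
    {k R : Type*} [Field k] [CommRing R] [Algebra k R]
    (𝒜 : ℕ → Submodule k R) [GradedAlgebra 𝒜]
    (Rplus : Submodule k R) (hRplus : Rplus = ⨆ d : ℕ, ⨆ _ : 0 < d, 𝒜 d)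
    (hne : Rplus ≠ ⊥) :
    ((∀ (e : ℤ), e < 0 → ∀ (n : ℕ) (δ : R →ₗ[k] R), IsDiffOpOfOrder k n δ →
        HomogeneousOfDegree 𝒜 δ e → δ = 0) →
      (∀ (n : ℕ) (δ : R →ₗ[k] R), IsDiffOpOfOrder k n δ → ∀ r ∈ Rplus, δ r ∈ Rplus) ∧
      Rplus.toAddSubgroup ≠ ⊥ ∧ Rplus.toAddSubgroup ≠ ⊤ ∧
      ¬ (∀ M : AddSubgroup R,
          (∀ (n : ℕ) (δ : R →ₗ[k] R), IsDiffOpOfOrder k n δ → ∀ r ∈ M, δ r ∈ M) →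
          M = ⊥ ∨ M = ⊤)) ∧
    ((∀ M : AddSubgroup R,
        (∀ (n : ℕ) (δ : R →ₗ[k] R), IsDiffOpOfOrder k n δ → ∀ r ∈ M, δ r ∈ M) →
        M = ⊥ ∨ M = ⊤) →
      ∃ e : ℤ, e < 0 ∧ ∃ (n : ℕ) (δ : R →ₗ[k] R), δ ≠ 0 ∧ IsDiffOpOfOrder k n δ ∧
        HomogeneousOfDegree 𝒜 δ e) := by
  -- common facts
  obtain ⟨x₀, hx₀mem, hx₀ne⟩ := (Submodule.ne_bot_iff Rplus).mp hne
  have hnontriv : Nontrivial R := nontrivial_of_ne x₀ 0 hx₀ne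
  have hbot : Rplus.toAddSubgroup ≠ ⊥ := by
    intro h
    apply hx₀ne
    have : x₀ ∈ Rplus.toAddSubgroup := hx₀mem
    rw [h] at this
    exact this
  have htop : Rplus.toAddSubgroup ≠ ⊤ := by
    intro h
    have h1 : (1 : R) ∈ Rplus := by
      have : (1 : R) ∈ Rplus.toAddSubgroup := by rw [h]; trivial
      exact this
    have := projL_zero_eq_zero_of_mem_plus 𝒜 hRplus h1
    rw [projL_apply, DirectSum.decompose_of_mem_same 𝒜 (SetLike.one_mem_graded 𝒜)] at this
    exact one_ne_zero this
  have main : (∀ (e : ℤ), e < 0 → ∀ (n : ℕ) (δ : R →ₗ[k] R), IsDiffOpOfOrder k n δ →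
      HomogeneousOfDegree 𝒜 δ e → δ = 0) →
      (∀ (n : ℕ) (δ : R →ₗ[k] R), IsDiffOpOfOrder k n δ → ∀ r ∈ Rplus, δ r ∈ Rplus) := by
    intro H n δ hδ r hr
    have hcomp : ∀ d : ℕ, 0 < d → ∀ x ∈ 𝒜 d, projL 𝒜 0 (δ x) = 0 := by
      intro d hd x hx
      have hneg : (-(d : ℤ)) < 0 := by omega
      have hzero := H _ hneg n (compOp 𝒜 (-(d : ℤ)) δ)
        (compOp_isDiffOp 𝒜 n δ hδ _) (compOp_homog 𝒜 _ δ)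
      have happ := compOp_apply_of_mem 𝒜 hx (-(d : ℤ)) δ
      rw [hzero] at happ
      have h0 : ((d : ℤ) + -(d : ℤ)) = 0 := by ring
      rw [h0] at happ
      unfold qL at happ
      rw [if_pos le_rfl] at happ
      simpa using happ.symm
    have hkey : projL 𝒜 0 (δ r) = 0 := by
      rw [hRplus] at hr
      refine Submodule.iSup_induction _ (motive := fun x => projL 𝒜 0 (δ x) = 0) hr ?_ (by simp) ?_
      · intro d x hx
        rcases Nat.eq_zero_or_pos d with h | h
        · subst h; rw [iSup_neg (lt_irrefl 0)] at hx
          simp only [Submodule.mem_bot] at hx; subst hx; simp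
        · rw [iSup_pos h] at hx
          exact hcomp d h x hx
      · intro x y hx hy; rw [map_add, map_add, hx, hy, add_zero]
    exact mem_plus_of_projL_zero 𝒜 hRplus hkey
  constructor
  · intro H
    refine ⟨main H, hbot, htop, ?_⟩
    intro hsimp
    rcases hsimp Rplus.toAddSubgroup (fun n δ hδ r hr => main H n δ hδ r hr) with h | h
    · exact hbot h
    · exact htop h
  · intro hsimp
    by_contra hcon
    push_neg at hcon
    have H : ∀ (e : ℤ), e < 0 → ∀ (n : ℕ) (δ : R →ₗ[k] R), IsDiffOpOfOrder k n δ →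
        HomogeneousOfDegree 𝒜 δ e → δ = 0 := by
      intro e he n δ hd hh
      by_contra hδ0
      exact hcon e he n δ hδ0 hd hh
    rcases hsimp Rplus.toAddSubgroup (fun n δ hδ r hr => main H n δ hδ r hr) with h | h
    · exact hbot h
    · exact htop h
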